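/- Let 0 < a ≤ b and M ≥ 0. There exists a constant C > 0, depending only on a, b and M, such that for all real numbers p₁, p₂ ∈ [a, b], q₁, q₂ ∈ [−M, M] and all real numbers ṗ₁, ṗ₂, q̇₁, q̇₂ one has | (2|q₁|·q̇₁·p₁ − q₁|q₁|·ṗ₁)/p₁² − (2|q₂|·q̇₂·p₂ − q₂|q₂|·ṗ₂)/p₂² | ≤ C·( |q̇₁ − q̇₂| + |ṗ₁ − ṗ₂| + (1 + |q̇₂| + |ṗ₂|)·( |p₁ − p₂| + |q₁ − q₂| ) ). -/

import Mathlib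

private lemma sq_abs_lip (x y : ℝ) : abs (x * |x| - y * |y|) ≤ (|x| + |y|) * |x - y| := by
  have hid : x * |x| - y * |y| = |x| * (x - y) + y * (|x| - |y|) := by ring
  calc abs (x * |x| - y * |y|) = |(|x|) * (x - y) + y * (|x| - |y|)| := by rw [hid]
    _ ≤ abs ((|x|) * (x - y)) + abs (y * (|x| - |y|)) := abs_add_le _ _
    _ = |x| * |x - y| + |y| * abs (|x| - |y|) := by rw [abs_mul, abs_mul, abs_abs]
    _ ≤ |x| * |x - y| + |y| * |x - y| :=
        add_le_add le_rfl (mul_le_mul_of_nonneg_left (abs_abs_sub_abs_le_abs_sub _ _) (abs_nonneg _))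
    _ = (|x| + |y|) * |x - y| := by ring

/-- pointwise Lipschitz-type estimate for the time derivative
`∂ₜ(q|q|/p) = (2|q|q̇p − q|q|ṗ)/p²` of the Euler nonlinearity on the box
`[a,b] × [−M,M]` with `0 < a`. -/
theorem euler_time_derivative_pointwise_estimate
    (a b M : ℝ) (ha : 0 < a) (hab : a ≤ b) (hM : 0 ≤ M) :
    ∃ C > 0, ∀ p₁ p₂ q₁ q₂ dp₁ dp₂ dq₁ dq₂ : ℝ,
      p₁ ∈ Set.Icc a b → p₂ ∈ Set.Icc a b →
      q₁ ∈ Set.Icc (-M) M → q₂ ∈ Set.Icc (-M) M →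
      |(2 * |q₁| * dq₁ * p₁ - q₁ * |q₁| * dp₁) / p₁ ^ 2 -
        (2 * |q₂| * dq₂ * p₂ - q₂ * |q₂| * dp₂) / p₂ ^ 2| ≤
      C * (|dq₁ - dq₂| + |dp₁ - dp₂| +
        (1 + |dq₂| + |dp₂|) * (|p₁ - p₂| + |q₁ - q₂|)) := by
  set K : ℝ := 2*M/a + 2/a + 2*M/a^2 + M^2/a^2 + 2*M^2*b/a^4 + 1 with hKdef
  have hb : 0 < b := lt_of_lt_of_le ha hab
  have hK0 : 0 < K := by positivity
  refine ⟨K, hK0, ?_⟩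
  intro p₁ p₂ q₁ q₂ dp₁ dp₂ dq₁ dq₂ hp₁ hp₂ hq₁ hq₂
  obtain ⟨hp₁a, hp₁b⟩ := hp₁
  obtain ⟨hp₂a, hp₂b⟩ := hp₂
  have hp₁0 : 0 < p₁ := lt_of_lt_of_le ha hp₁a
  have hp₂0 : 0 < p₂ := lt_of_lt_of_le ha hp₂a
  have hq₁M : |q₁| ≤ M := abs_le.mpr hq₁
  have hq₂M : |q₂| ≤ M := abs_le.mpr hq₂
  -- six terms
  set t1 : ℝ := 2 * (|q₁|/p₁) * (dq₁ - dq₂)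
  set t2 : ℝ := 2 * dq₂ * ((|q₁| - |q₂|)/p₁)
  set t3 : ℝ := 2 * dq₂ * (|q₂| * (p₂ - p₁)/(p₁*p₂))
  set t4 : ℝ := -(q₁*|q₁|/p₁^2) * (dp₁ - dp₂)
  set t5 : ℝ := -dp₂ * ((q₁*|q₁| - q₂*|q₂|)/p₁^2)
  set t6 : ℝ := -dp₂ * (q₂*|q₂| * (p₂^2 - p₁^2)/(p₁^2*p₂^2))
  have hid : (2 * |q₁| * dq₁ * p₁ - q₁ * |q₁| * dp₁) / p₁ ^ 2 -
        (2 * |q₂| * dq₂ * p₂ - q₂ * |q₂| * dp₂) / p₂ ^ 2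
      = t1 + t2 + t3 + t4 + t5 + t6 := by
    simp only [t1, t2, t3, t4, t5, t6]
    field_simp
    ring
  rw [hid]
  -- bounds on individual terms
  have h1 : |t1| ≤ K * |dq₁ - dq₂| := by
    have he : |t1| = 2 * (|q₁|/p₁) * |dq₁ - dq₂| := by
      rw [abs_mul, abs_mul, abs_two, abs_of_nonneg (by positivity : (0:ℝ) ≤ |q₁|/p₁)]
    rw [he]
    have hc : 2 * (|q₁|/p₁) ≤ K := by
      have : |q₁|/p₁ ≤ M/a := div_le_div₀ hM hq₁M ha hp₁a
      have h2 : (0:ℝ) ≤ 2/a := by positivity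
      have h3 : (0:ℝ) ≤ 2*M/a^2 := by positivity
      have h4 : (0:ℝ) ≤ M^2/a^2 := by positivity
      have h5 : (0:ℝ) ≤ 2*M^2*b/a^4 := by positivity
      have : 2 * (|q₁|/p₁) ≤ 2*(M/a) := by linarith
      rw [hKdef]; rw [mul_div_assoc]; linarith
    exact mul_le_mul_of_nonneg_right hc (abs_nonneg _)
  have h2 : |t2| ≤ K * (|dq₂| * |q₁ - q₂|) := by
    have he : |t2| = 2 * |dq₂| * (abs (|q₁| - |q₂|)/p₁) := by
      rw [abs_mul, abs_mul, abs_two, abs_div, abs_of_pos hp₁0]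
    rw [he]
    have hd : abs (|q₁| - |q₂|) ≤ |q₁ - q₂| := abs_abs_sub_abs_le_abs_sub _ _
    have hdiv : abs (|q₁| - |q₂|)/p₁ ≤ |q₁ - q₂|/a :=
      div_le_div₀ (abs_nonneg _) hd ha hp₁a
    have hK2 : 2/a ≤ K := by
      have h2' : (0:ℝ) ≤ 2*M/a := by positivity
      have h3 : (0:ℝ) ≤ 2*M/a^2 := by positivity
      have h4 : (0:ℝ) ≤ M^2/a^2 := by positivity
      have h5 : (0:ℝ) ≤ 2*M^2*b/a^4 := by positivity
      rw [hKdef]; linarith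
    calc 2 * |dq₂| * (abs (|q₁| - |q₂|)/p₁) ≤ 2 * |dq₂| * (|q₁ - q₂|/a) := by
          apply mul_le_mul_of_nonneg_left hdiv (by positivity)
      _ = (2/a) * (|dq₂| * |q₁ - q₂|) := by ring
      _ ≤ K * (|dq₂| * |q₁ - q₂|) :=
          mul_le_mul_of_nonneg_right hK2 (by positivity)
  have h3 : |t3| ≤ K * (|dq₂| * |p₁ - p₂|) := by
    have he : |t3| = 2 * |dq₂| * (|q₂| * |p₂ - p₁|/(p₁*p₂)) := by
      rw [abs_mul, abs_mul, abs_two, abs_div, abs_mul, abs_abs,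
        abs_of_pos (mul_pos hp₁0 hp₂0)]
    rw [he]
    have hdiv : |q₂| * |p₂ - p₁|/(p₁*p₂) ≤ M * |p₂ - p₁|/(a*a) := by
      apply div_le_div₀ (by positivity)
        (mul_le_mul_of_nonneg_right hq₂M (abs_nonneg _)) (by positivity)
      exact mul_le_mul hp₁a hp₂a ha.le (le_trans ha.le hp₁a)
    have hK3 : 2*M/a^2 ≤ K := by
      have h2' : (0:ℝ) ≤ 2*M/a := by positivity
      have h3' : (0:ℝ) ≤ 2/a := by positivity
      have h4 : (0:ℝ) ≤ M^2/a^2 := by positivity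
      have h5 : (0:ℝ) ≤ 2*M^2*b/a^4 := by positivity
      rw [hKdef]; linarith
    have hsymm : |p₂ - p₁| = |p₁ - p₂| := abs_sub_comm _ _
    calc 2 * |dq₂| * (|q₂| * |p₂ - p₁|/(p₁*p₂))
        ≤ 2 * |dq₂| * (M * |p₂ - p₁|/(a*a)) := by
          apply mul_le_mul_of_nonneg_left hdiv (by positivity)
      _ = (2*M/a^2) * (|dq₂| * |p₁ - p₂|) := by rw [hsymm]; ring
      _ ≤ K * (|dq₂| * |p₁ - p₂|) :=
          mul_le_mul_of_nonneg_right hK3 (by positivity)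
  have h4 : |t4| ≤ K * |dp₁ - dp₂| := by
    have he : |t4| = (|q₁| * |q₁|) / p₁^2 * |dp₁ - dp₂| := by
      rw [abs_mul, abs_neg, abs_div, abs_mul, abs_abs,
        abs_of_pos (by positivity : (0:ℝ) < p₁^2)]
    rw [he]
    have hc : (|q₁| * |q₁|) / p₁^2 ≤ K := by
      have hdd : (|q₁| * |q₁|) / p₁^2 ≤ M*M/(a*a) := by
        apply div_le_div₀ (by positivity) (mul_le_mul hq₁M hq₁M (abs_nonneg _) hM)
          (by positivity)
        rw [pow_two]
        exact mul_le_mul hp₁a hp₁a ha.le (le_trans ha.le hp₁a)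
      have h2' : (0:ℝ) ≤ 2*M/a := by positivity
      have h3' : (0:ℝ) ≤ 2/a := by positivity
      have h4' : (0:ℝ) ≤ 2*M/a^2 := by positivity
      have h5 : (0:ℝ) ≤ 2*M^2*b/a^4 := by positivity
      have heq : M*M/(a*a) = M^2/a^2 := by ring
      rw [hKdef]; rw [heq] at hdd; linarith
    exact mul_le_mul_of_nonneg_right hc (abs_nonneg _)
  have h5 : |t5| ≤ K * (|dp₂| * |q₁ - q₂|) := by
    have he : |t5| = |dp₂| * (abs (q₁*|q₁| - q₂*|q₂|)/p₁^2) := by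
      rw [abs_mul, abs_neg, abs_div, abs_of_pos (by positivity : (0:ℝ) < p₁^2)]
    rw [he]
    have hnum : abs (q₁*|q₁| - q₂*|q₂|) ≤ 2*M * |q₁ - q₂| := by
      have key : abs (q₁*|q₁| - q₂*|q₂|) ≤ (|q₁| + |q₂|) * |q₁ - q₂| :=
        sq_abs_lip q₁ q₂
      calc abs (q₁*|q₁| - q₂*|q₂|) ≤ (|q₁| + |q₂|) * |q₁ - q₂| := key
        _ ≤ 2*M * |q₁ - q₂| := by
            apply mul_le_mul_of_nonneg_right (by linarith) (abs_nonneg _)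
    have hdiv : abs (q₁*|q₁| - q₂*|q₂|)/p₁^2 ≤ 2*M*|q₁ - q₂|/(a*a) := by
      apply div_le_div₀ (by positivity) hnum (by positivity)
      rw [pow_two]
      exact mul_le_mul hp₁a hp₁a ha.le (le_trans ha.le hp₁a)
    have hK5 : 2*M/a^2 ≤ K := by
      have h2' : (0:ℝ) ≤ 2*M/a := by positivity
      have h3' : (0:ℝ) ≤ 2/a := by positivity
      have h4' : (0:ℝ) ≤ M^2/a^2 := by positivity
      have h5' : (0:ℝ) ≤ 2*M^2*b/a^4 := by positivity
      rw [hKdef]; linarith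
    calc |dp₂| * (abs (q₁*|q₁| - q₂*|q₂|)/p₁^2)
        ≤ |dp₂| * (2*M*|q₁ - q₂|/(a*a)) := by
          apply mul_le_mul_of_nonneg_left hdiv (abs_nonneg _)
      _ = (2*M/a^2) * (|dp₂| * |q₁ - q₂|) := by ring
      _ ≤ K * (|dp₂| * |q₁ - q₂|) :=
          mul_le_mul_of_nonneg_right hK5 (by positivity)
  have h6 : |t6| ≤ K * (|dp₂| * |p₁ - p₂|) := by
    have he : |t6| = |dp₂| * ((|q₂| * |q₂|) * |p₂^2 - p₁^2|/(p₁^2*p₂^2)) := by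
      rw [abs_mul, abs_neg, abs_div, abs_mul, abs_mul, abs_abs,
        abs_of_pos (by positivity : (0:ℝ) < p₁^2*p₂^2)]
    rw [he]
    have hnum : |p₂^2 - p₁^2| ≤ 2*b*|p₁ - p₂| := by
      have : |p₂^2 - p₁^2| = |p₂ + p₁| * |p₁ - p₂| := by
        rw [← abs_mul, abs_sub_comm]; ring_nf
      rw [this]
      apply mul_le_mul_of_nonneg_right _ (abs_nonneg _)
      rw [abs_of_pos (by linarith)]; linarith
    have hdiv : (|q₂| * |q₂|) * |p₂^2 - p₁^2|/(p₁^2*p₂^2)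
        ≤ M*M*(2*b*|p₁ - p₂|)/(a^2*a^2) := by
      apply div_le_div₀ (by positivity) _ (by positivity)
      · apply mul_le_mul _ _ (by positivity) (by positivity)
        · exact pow_le_pow_left₀ ha.le hp₁a 2
        · exact pow_le_pow_left₀ ha.le hp₂a 2
      · exact mul_le_mul (mul_le_mul hq₂M hq₂M (abs_nonneg _) hM) hnum
          (abs_nonneg _) (by positivity)
    have hK6 : 2*M^2*b/a^4 ≤ K := by
      have h2' : (0:ℝ) ≤ 2*M/a := by positivity
      have h3' : (0:ℝ) ≤ 2/a := by positivity
      have h4' : (0:ℝ) ≤ 2*M/a^2 := by positivity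
      have h5' : (0:ℝ) ≤ M^2/a^2 := by positivity
      rw [hKdef]; linarith
    calc |dp₂| * ((|q₂| * |q₂|) * |p₂^2 - p₁^2|/(p₁^2*p₂^2))
        ≤ |dp₂| * (M*M*(2*b*|p₁ - p₂|)/(a^2*a^2)) := by
          apply mul_le_mul_of_nonneg_left hdiv (abs_nonneg _)
      _ = (2*M^2*b/a^4) * (|dp₂| * |p₁ - p₂|) := by ring
      _ ≤ K * (|dp₂| * |p₁ - p₂|) :=
          mul_le_mul_of_nonneg_right hK6 (by positivity)
  clear hid hKdef
  clear_value t1 t2 t3 t4 t5 t6 K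
  have htri : |t1 + t2 + t3 + t4 + t5 + t6|
      ≤ |t1| + |t2| + |t3| + |t4| + |t5| + |t6| := by
    calc |t1 + t2 + t3 + t4 + t5 + t6| ≤ |t1 + t2 + t3 + t4 + t5| + |t6| := abs_add_le _ _
      _ ≤ |t1 + t2 + t3 + t4| + |t5| + |t6| := by linarith [abs_add_le (t1+t2+t3+t4) t5]
      _ ≤ |t1 + t2 + t3| + |t4| + |t5| + |t6| := by linarith [abs_add_le (t1+t2+t3) t4]
      _ ≤ |t1 + t2| + |t3| + |t4| + |t5| + |t6| := by linarith [abs_add_le (t1+t2) t3]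
      _ ≤ |t1| + |t2| + |t3| + |t4| + |t5| + |t6| := by linarith [abs_add_le t1 t2]
  have hfin : |t1| + |t2| + |t3| + |t4| + |t5| + |t6|
      ≤ K * (|dq₁ - dq₂| + |dp₁ - dp₂| +
        (1 + |dq₂| + |dp₂|) * (|p₁ - p₂| + |q₁ - q₂|)) := by
    nlinarith [mul_nonneg hK0.le (abs_nonneg (p₁ - p₂)),
      mul_nonneg hK0.le (abs_nonneg (q₁ - q₂)),
      mul_nonneg (mul_nonneg hK0.le (abs_nonneg dq₂)) (abs_nonneg (p₁ - p₂)),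
      mul_nonneg (mul_nonneg hK0.le (abs_nonneg dq₂)) (abs_nonneg (q₁ - q₂)),
      mul_nonneg (mul_nonneg hK0.le (abs_nonneg dp₂)) (abs_nonneg (p₁ - p₂)),
      mul_nonneg (mul_nonneg hK0.le (abs_nonneg dp₂)) (abs_nonneg (q₁ - q₂))]
  linarith
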